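/- The matrices a = [[1,2],[0,1]] and b = [[1,0],[2,1]] generate a free subgroup of rank 2 in SL₂(ℤ). -/

import Mathlib

open Matrix

abbrev SL2 := Matrix.SpecialLinearGroup (Fin 2) ℤ

def sg : Bool → ℤ := fun b => if b then 1 else -1

def matM : Fin 2 × Bool → Matrix (Fin 2) (Fin 2) ℤ :=
  fun p => if p.1 = 0 then !![1, 2 * sg p.2; 0, 1] else !![1, 0; 2 * sg p.2, 1]

def mat (p : Fin 2 × Bool) : SL2 :=
  ⟨matM p, by rcases p with ⟨i, b⟩; fin_cases i <;> cases b <;>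
    simp [matM, sg, Matrix.det_fin_two_of]⟩

@[simp] lemma coe_mat (p : Fin 2 × Bool) : ((mat p : SL2) : Matrix (Fin 2) (Fin 2) ℤ) = matM p := rfl

lemma mat_mul_inv (i : Fin 2) : mat (i, true) * mat (i, false) = 1 := by
  apply Subtype.ext
  rw [Matrix.SpecialLinearGroup.coe_mul]
  fin_cases i <;>
    simp [mat, matM, sg, Matrix.SpecialLinearGroup.coe_mul, Matrix.mul_fin_two,
      Matrix.one_fin_two] <;> norm_num

def Pong (p : Fin 2 × Bool) (v : Fin 2 → ℤ) : Prop :=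
  (if p.1 = 0 then (v 1)^2 < (v 0)^2 else (v 0)^2 < (v 1)^2) ∧ 0 < sg p.2 * v 0 * v 1

lemma mulVec_matM (p : Fin 2 × Bool) (v : Fin 2 → ℤ) :
    matM p *ᵥ v = if p.1 = 0 then ![v 0 + 2 * sg p.2 * v 1, v 1] else ![v 0, 2 * sg p.2 * v 0 + v 1] := by
  rcases p with ⟨i, b⟩
  fin_cases i <;> funext j <;> fin_cases j <;>
    simp [matM, Matrix.mulVec, dotProduct, Fin.sum_univ_two] <;> ring

lemma step (p q : Fin 2 × Bool) (v : Fin 2 → ℤ)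
    (hc : ¬(p.1 = q.1 ∧ p.2 = !q.2)) (h : Pong q v) :
    Pong p (matM p *ᵥ v) := by
  obtain ⟨i, s⟩ := p
  obtain ⟨j, t⟩ := q
  obtain ⟨h1, h2⟩ := h
  rw [mulVec_matM]
  set x := v 0 with hx
  set y := v 1 with hy
  fin_cases i <;> fin_cases j <;> cases s <;> cases t <;>
    simp_all [Pong, sg] <;>
    constructor <;>
    nlinarith [sq_nonneg (x + y), sq_nonneg (x - y), sq_nonneg x, sq_nonneg y]

lemma main : ∀ (L : List (Fin 2 × Bool)) (q : Fin 2 × Bool) (v : Fin 2 → ℤ),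
    Pong q v →
    (∀ (L₂ L₃ : List (Fin 2 × Bool)) x b, (L ++ [q]) ≠ L₂ ++ (x, b) :: (x, !b) :: L₃) →
    Pong ((L ++ [q]).headI) ((((L.map mat).prod : SL2) : Matrix (Fin 2) (Fin 2) ℤ) *ᵥ v)
  | [], q, v, hv, _ => by simpa [Matrix.one_mulVec] using hv
  | p :: L, q, v, hv, hred => by
    have ih := main L q v hv (fun L₂ L₃ x b h => hred (p :: L₂) L₃ x b (by simp [h]))
    obtain ⟨r, t, hL⟩ : ∃ r t, L ++ [q] = r :: t := by
      cases L with
      | nil => exact ⟨q, [], rfl⟩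
      | cons a L' => exact ⟨a, L' ++ [q], rfl⟩
    rw [hL] at ih
    have hc : ¬(p.1 = r.1 ∧ p.2 = !r.2) := by
      rintro ⟨h1, h2⟩
      refine hred [] t p.1 p.2 ?_
      have hr : r = (p.1, !p.2) := by
        obtain ⟨a, c⟩ := r
        simp only [Prod.mk.injEq]
        exact ⟨h1.symm, by simp [h2]⟩
      simp [hL, hr]
    have hs := step p r _ hc ih
    simp only [List.cons_append, List.headI_cons, List.map_cons, List.prod_cons,
      Matrix.SpecialLinearGroup.coe_mul, ← Matrix.mulVec_mulVec]
    simpa using hs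

lemma mat_inv (i : Fin 2) : (mat (i, true))⁻¹ = mat (i, false) :=
  inv_eq_of_mul_eq_one_right (mat_mul_inv i)

lemma base_pong (q : Fin 2 × Bool) :
    Pong q (matM q *ᵥ (if q.1 = 0 then ![0, 1] else ![1, 0])) := by
  obtain ⟨i, s⟩ := q
  fin_cases i <;> cases s <;>
    simp [mulVec_matM, Pong, sg, matM] <;> norm_num

/-- The matrices `[[1,2],[0,1]]` and `[[1,0],[2,1]]` generate a free subgroup of
rank 2 in `SL₂(ℤ)`: the homomorphism from the free group on two generators sending
the generators to these matrices is injective. -/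
theorem stmt_1 :
    ∃ a b : Matrix.SpecialLinearGroup (Fin 2) ℤ,
      (a : Matrix (Fin 2) (Fin 2) ℤ) = !![1, 2; 0, 1] ∧
      (b : Matrix (Fin 2) (Fin 2) ℤ) = !![1, 0; 2, 1] ∧
      Function.Injective (FreeGroup.lift (fun i : Fin 2 => if i = 0 then a else b)) := by
  refine ⟨mat (0, true), mat (1, true), by norm_num [mat, matM, sg],
    by norm_num [mat, matM, sg], ?_⟩
  set f : Fin 2 → SL2 := fun i => if i = 0 then mat (0, true) else mat (1, true) with hf
  have cond_eq : (fun x : Fin 2 × Bool => cond x.2 (f x.1) (f x.1)⁻¹) = mat := by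
    funext p
    obtain ⟨i, u⟩ := p
    fin_cases i <;> cases u <;> simp [hf, mat_inv]
  rw [injective_iff_map_eq_one]
  intro w hw
  by_contra hne
  have hLne : w.toWord ≠ [] := fun h => hne (FreeGroup.toWord_eq_nil_iff.mp h)
  obtain hnil | ⟨L, q, hLq⟩ := w.toWord.eq_nil_or_concat
  · exact hLne hnil
  rw [List.concat_eq_append] at hLq
  have hred : ∀ (L₂ L₃ : List (Fin 2 × Bool)) x b,
      (L ++ [q]) ≠ L₂ ++ (x, b) :: (x, !b) :: L₃ := by
    intro L₂ L₃ x b h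
    exact FreeGroup.reduce.not (L₁ := w.toWord) (by rw [FreeGroup.reduce_toWord, hLq, h])
  have hprod : ((L.map mat).prod * mat q : SL2) = 1 := by
    have : FreeGroup.lift f w = (w.toWord.map mat).prod := by
      conv_lhs => rw [← FreeGroup.mk_toWord (x := w)]
      rw [FreeGroup.lift_mk, cond_eq]
    rw [this, hLq, List.map_append, List.prod_append] at hw
    simpa using hw
  have hP := main L q _ (base_pong q) hred
  have hvec : (((L.map mat).prod : SL2) : Matrix (Fin 2) (Fin 2) ℤ) *ᵥ
      (matM q *ᵥ (if q.1 = 0 then ![0, 1] else ![1, 0])) =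
      (if q.1 = 0 then ![0, 1] else ![1, 0]) := by
    rw [← coe_mat q, Matrix.mulVec_mulVec, ← Matrix.SpecialLinearGroup.coe_mul, hprod]
    simp [Matrix.one_mulVec]
  rw [hvec] at hP
  obtain ⟨-, hP2⟩ := hP
  rcases eq_or_ne q.1 0 with h0 | h0 <;> simp [h0] at hP2
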